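/- Define α^(M)(ℓ) = ∏_{i=0}^{ℓ−1} (ℓ+3i+2)/(ℓ+3i+3) for natural ℓ ≥ 1. Then lim_{ℓ→∞} α^(M)(ℓ) = 2^(−2/3). -/

import Mathlib

open Real Filter Finset

/-- Telescoping product: ∏_{i<n} (ℓ+3i+c)/(ℓ+3i+c+3) = (ℓ+c)/(ℓ+3n+c). -/
lemma tele (c : ℝ) (hc : 0 < c) (ℓ : ℕ) :
    ∀ n : ℕ, ∏ i ∈ Finset.range n, (((ℓ : ℝ) + 3 * i + c) / ((ℓ : ℝ) + 3 * i + c + 3))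
      = ((ℓ : ℝ) + c) / ((ℓ : ℝ) + 3 * n + c) := by
  intro n
  induction n with
  | zero => simp [div_self (by positivity : ((ℓ:ℝ) + c) ≠ 0)]
  | succ n ih =>
      rw [Finset.prod_range_succ, ih]
      have h1 : ((ℓ:ℝ) + 3 * n + c) ≠ 0 := by positivity
      have h2 : ((ℓ:ℝ) + 3 * n + c + 3) ≠ 0 := by positivity
      have h3 : ((ℓ:ℝ) + 3 * (n+1:ℕ) + c) ≠ 0 := by positivity
      push_cast
      field_simp
      ring_nf

lemma quarter (c : ℝ) (hc : 0 < c) :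
    Filter.Tendsto (fun ℓ : ℕ => ((ℓ:ℝ) + c) / (4 * ℓ + c)) Filter.atTop (nhds (1/4)) := by
  have hn : Filter.Tendsto (fun ℓ : ℕ => (ℓ:ℝ)) Filter.atTop Filter.atTop :=
    tendsto_natCast_atTop_atTop
  have hinv : Filter.Tendsto (fun ℓ : ℕ => c / (ℓ:ℝ)) Filter.atTop (nhds 0) :=
    Filter.Tendsto.div_atTop tendsto_const_nhds hn
  have h1 : Filter.Tendsto (fun ℓ : ℕ => (1 + c / (ℓ:ℝ)) / (4 + c / (ℓ:ℝ)))
      Filter.atTop (nhds (1/4)) := by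
    have := Filter.Tendsto.div (f := fun ℓ : ℕ => 1 + c / (ℓ:ℝ))
      (g := fun ℓ : ℕ => 4 + c / (ℓ:ℝ))
      (tendsto_const_nhds.add hinv) (tendsto_const_nhds.add hinv) (by norm_num)
    simp at this ⊢; exact this
  refine h1.congr' ?_
  filter_upwards [Filter.eventually_gt_atTop 0] with ℓ hℓ
  have hℓ' : (ℓ:ℝ) ≠ 0 := by positivity
  field_simp

theorem stmt6 :
    Filter.Tendsto
      (fun ℓ : ℕ => ∏ i ∈ Finset.range ℓ,
        ((ℓ : ℝ) + 3 * i + 2) / ((ℓ : ℝ) + 3 * i + 3))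
      Filter.atTop (nhds ((2 : ℝ) ^ (-(2 / 3) : ℝ))) := by
  set P : ℕ → ℝ := fun ℓ => ∏ i ∈ Finset.range ℓ,
      ((ℓ : ℝ) + 3 * i + 2) / ((ℓ : ℝ) + 3 * i + 3) with hP
  have hPpos : ∀ ℓ, 0 < P ℓ := by
    intro ℓ
    apply Finset.prod_pos
    intro i _
    positivity
  -- cube of the product is squeezed
  have hcube : Filter.Tendsto (fun ℓ => (P ℓ) ^ (3:ℕ)) Filter.atTop (nhds (1/4)) := by
    have hlow : ∀ ℓ : ℕ, ((ℓ:ℝ) + 1) / (4 * ℓ + 1) ≤ (P ℓ) ^ (3:ℕ) := by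
      intro ℓ
      have := tele 1 one_pos ℓ ℓ
      rw [show (4:ℝ) * ℓ + 1 = (ℓ:ℝ) + 3 * ℓ + 1 by ring, ← this, hP, ← Finset.prod_pow]
      apply Finset.prod_le_prod
      · intro i _; positivity
      · intro i _
        set n : ℝ := (ℓ:ℝ) + 3 * i with hn
        have hn0 : 0 ≤ n := by positivity
        rw [div_pow, div_le_div_iff₀ (by positivity) (by positivity)]
        nlinarith [sq_nonneg n, hn0]
    have hhigh : ∀ ℓ : ℕ, (P ℓ) ^ (3:ℕ) ≤ ((ℓ:ℝ) + 2) / (4 * ℓ + 2) := by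
      intro ℓ
      have := tele 2 two_pos ℓ ℓ
      rw [show (4:ℝ) * ℓ + 2 = (ℓ:ℝ) + 3 * ℓ + 2 by ring, ← this, hP, ← Finset.prod_pow]
      apply Finset.prod_le_prod
      · intro i _; positivity
      · intro i _
        set n : ℝ := (ℓ:ℝ) + 3 * i with hn
        have hn0 : 0 ≤ n := by positivity
        rw [div_pow, div_le_div_iff₀ (by positivity) (by positivity)]
        nlinarith [sq_nonneg n, hn0]
    exact tendsto_of_tendsto_of_tendsto_of_le_of_le
      (quarter 1 one_pos) (quarter 2 two_pos) hlow hhigh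
  -- take cube roots
  have hcont : ContinuousAt (fun x : ℝ => x ^ ((1:ℝ)/3)) (1/4) :=
    Real.continuousAt_rpow_const _ _ (Or.inl (by norm_num))
  have h2 : Filter.Tendsto (fun ℓ => ((P ℓ) ^ (3:ℕ)) ^ ((1:ℝ)/3)) Filter.atTop
      (nhds (((1:ℝ)/4) ^ ((1:ℝ)/3))) := hcont.tendsto.comp hcube
  have heq : ∀ ℓ, ((P ℓ) ^ (3:ℕ)) ^ ((1:ℝ)/3) = P ℓ := by
    intro ℓ
    rw [← Real.rpow_natCast (P ℓ) 3, ← Real.rpow_mul (hPpos ℓ).le]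
    norm_num
  have hval : ((1:ℝ)/4) ^ ((1:ℝ)/3) = (2:ℝ) ^ (-(2/3) : ℝ) := by
    have h4 : ((1:ℝ)/4) = (2:ℝ) ^ ((-2:ℝ)) := by
      rw [Real.rpow_neg (by norm_num), show ((2:ℝ)) ^ ((2:ℝ)) = 4 by
        rw [show ((2:ℝ)) = ((2:ℕ):ℝ) by norm_num, Real.rpow_natCast]; norm_num]
      norm_num
    rw [h4, ← Real.rpow_mul (by norm_num)]
    norm_num
  rw [← hval]
  exact h2.congr heq
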